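/- For every k ∈ [n], the Top-k norm on ℝ_{\geq 0}^n, defined as the sum of the k largest coordinates of x, is continuously submodular. -/

import Mathlib

/-- Continuous submodularity on the nonnegative orthant. -/
def ContSubmodular {n : ℕ} (f : (Fin n → ℝ) → ℝ) : Prop :=
  ∀ x y : Fin n → ℝ, (∀ i, 0 ≤ x i) → (∀ i, 0 ≤ y i) →
    f (x ⊔ y) + f (x ⊓ y) ≤ f x + f y

/-- The descending rearrangement `x^↓` of a vector `x`. -/
noncomputable def sortDesc {n : ℕ} (x : Fin n → ℝ) : Fin n → ℝ :=
  fun i => x (Tuple.sort x i.rev)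

/-- The Top-k norm: the sum of the `k` largest coordinates. -/
noncomputable def topk {n : ℕ} (k : ℕ) (x : Fin n → ℝ) : ℝ :=
  ∑ i : Fin n, if (i : ℕ) < k then sortDesc x i else 0

/-- The threshold function `g k t x = k·t + ∑ (x i - t)₊`. -/
noncomputable def gAux {n : ℕ} (k : ℕ) (t : ℝ) (x : Fin n → ℝ) : ℝ :=
  (k : ℝ) * t + ∑ i : Fin n, max (x i - t) 0

lemma sortDesc_antitone {n : ℕ} (x : Fin n → ℝ) : Antitone (sortDesc x) := by
  intro i j hij
  exact Tuple.monotone_sort x (Fin.rev_le_rev.mpr hij)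

lemma sum_comp_sortDesc {n : ℕ} (x : Fin n → ℝ) (h : ℝ → ℝ) :
    ∑ i : Fin n, h (sortDesc x i) = ∑ i : Fin n, h (x i) := by
  unfold sortDesc
  exact Equiv.sum_comp ((Fin.revPerm).trans (Tuple.sort x)) (fun i => h (x i))

lemma card_lt_k {n k : ℕ} (hkn : k ≤ n) (t : ℝ) :
    ∑ i : Fin n, (if (i : ℕ) < k then t else 0) = (k : ℝ) * t := by
  rw [Fin.sum_univ_eq_sum_range (fun i => if i < k then t else 0) n]
  have : ∀ i, (if i < k then t else 0) = if i ∈ Finset.range k then t else 0 := by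
    intro i; simp [Finset.mem_range]
  simp_rw [this]
  rw [Finset.sum_ite_mem, Finset.inter_eq_right.mpr (Finset.range_subset_range.mpr hkn)]
  simp [mul_comm]

/-- `topk ≤ gAux t` for every `t`. -/
lemma topk_le_gAux {n : ℕ} (k : ℕ) (hkn : k ≤ n) (t : ℝ) (x : Fin n → ℝ) :
    topk k x ≤ gAux k t x := by
  unfold topk gAux
  rw [← sum_comp_sortDesc x (fun a => max (a - t) 0), ← card_lt_k hkn t,
    ← Finset.sum_add_distrib]
  apply Finset.sum_le_sum
  intro i _
  by_cases h : (i : ℕ) < k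
  · simp only [h, if_true]
    have := le_max_left (sortDesc x i - t) 0
    linarith
  · simp only [h, if_false]
    positivity

/-- `topk = gAux t` for `t` the `k`-th largest entry. -/
lemma topk_eq_gAux {n : ℕ} (k : ℕ) (hk : 1 ≤ k) (hkn : k ≤ n) (x : Fin n → ℝ) :
    topk k x = gAux k (sortDesc x ⟨k - 1, by omega⟩) x := by
  set t := sortDesc x ⟨k - 1, by omega⟩ with ht
  unfold topk gAux
  rw [← sum_comp_sortDesc x (fun a => max (a - t) 0), ← card_lt_k (n := n) hkn t,
    ← Finset.sum_add_distrib]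
  apply Finset.sum_congr rfl
  intro i _
  by_cases h : (i : ℕ) < k
  · simp only [h, if_true]
    have hle : t ≤ sortDesc x i := by
      apply sortDesc_antitone
      exact Fin.le_def.mpr (by simp; omega)
    rw [max_eq_left (by linarith)]; ring
  · simp only [h, if_false]
    have hle : sortDesc x i ≤ t := by
      apply sortDesc_antitone
      exact Fin.le_def.mpr (by simp; omega)
    rw [max_eq_right (by linarith)]; ring

lemma key_pointwise (a b t s : ℝ) (hts : t ≤ s) :
    max (max a b - s) 0 + max (min a b - t) 0 ≤ max (a - t) 0 + max (b - s) 0 := by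
  rcases le_total a b with h | h
  · rw [max_eq_right h, min_eq_left h]
    rcases max_cases (b - s) 0 with ⟨h1, h1'⟩ | ⟨h1, h1'⟩ <;>
    rcases max_cases (a - t) 0 with ⟨h2, h2'⟩ | ⟨h2, h2'⟩ <;> linarith
  · rw [max_eq_left h, min_eq_right h]
    rcases max_cases (a - s) 0 with ⟨h1, h1'⟩ | ⟨h1, h1'⟩ <;>
    rcases max_cases (b - t) 0 with ⟨h2, h2'⟩ | ⟨h2, h2'⟩ <;>
    rcases max_cases (a - t) 0 with ⟨h3, h3'⟩ | ⟨h3, h3'⟩ <;>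
    rcases max_cases (b - s) 0 with ⟨h4, h4'⟩ | ⟨h4, h4'⟩ <;> linarith

lemma gAux_mixed {n : ℕ} (k : ℕ) (t s : ℝ) (hts : t ≤ s) (x y : Fin n → ℝ) :
    gAux k s (x ⊔ y) + gAux k t (x ⊓ y) ≤ gAux k t x + gAux k s y := by
  unfold gAux
  have : ∀ i : Fin n, max ((x ⊔ y) i - s) 0 + max ((x ⊓ y) i - t) 0 ≤
      max (x i - t) 0 + max (y i - s) 0 := by
    intro i
    simp only [Pi.sup_apply, Pi.inf_apply]
    exact key_pointwise (x i) (y i) t s hts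
  have hsum := Finset.sum_le_sum (fun i (_ : i ∈ Finset.univ) => this i)
  rw [Finset.sum_add_distrib, Finset.sum_add_distrib] at hsum
  linarith

lemma core {n : ℕ} (k : ℕ) (hk : 1 ≤ k) (hkn : k ≤ n) (x y : Fin n → ℝ)
    (h : sortDesc x ⟨k - 1, by omega⟩ ≤ sortDesc y ⟨k - 1, by omega⟩) :
    topk k (x ⊔ y) + topk k (x ⊓ y) ≤ topk k x + topk k y := by
  set t := sortDesc x ⟨k - 1, by omega⟩
  set s := sortDesc y ⟨k - 1, by omega⟩
  calc topk k (x ⊔ y) + topk k (x ⊓ y) ≤ gAux k s (x ⊔ y) + gAux k t (x ⊓ y) := by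
        have h1 := topk_le_gAux k hkn s (x ⊔ y)
        have h2 := topk_le_gAux k hkn t (x ⊓ y)
        linarith
    _ ≤ gAux k t x + gAux k s y := gAux_mixed k t s h x y
    _ = topk k x + topk k y := by
        rw [← topk_eq_gAux k hk hkn x, ← topk_eq_gAux k hk hkn y]

theorem topk_norm_submodular {n : ℕ} (k : ℕ) (hk : 1 ≤ k) (hkn : k ≤ n) :
    ContSubmodular (fun x : Fin n → ℝ => topk k x) := by
  intro x y _ _
  simp only
  rcases le_total (sortDesc x ⟨k - 1, by omega⟩) (sortDesc y ⟨k - 1, by omega⟩) with h | h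
  · exact core k hk hkn x y h
  · have := core k hk hkn y x h
    rw [sup_comm, inf_comm] at this
    linarith
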